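/- Let μ be a partition of n+k and let {(a₁,b₁),…,(a_k,b_k)} be a set of k distinct cells of μ, listed in increasing lexicographic order. Then ∂x_{n+1}^{a₁}∂y_{n+1}^{b₁}⋯∂x_{n+k}^{a_k}∂y_{n+k}^{b_k} Δ_μ(X_{n+k};Y_{n+k}) = c · Δ_{μ/{(a₁,b₁),…,(a_k,b_k)}}(X_n;Y_n) + C, where c is a nonzero rational constant and C is a linear combination, with coefficients in ℚ[x_{n+1},y_{n+1},…,x_{n+k},y_{n+k}] all vanishing at x_{n+1}=y_{n+1}=⋯=x_{n+k}=y_{n+k}=0, of polynomials Δ_{μ/{(a′₁,b′₁),…,(a′_k,b′_k)}}(X_n;Y_n) with each cell (a′_j,b′_j) ∈ μ lying in the shadow of (a_j,b_j). -/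

import Mathlib

open MvPolynomial

noncomputable section

/-- The monomial differential operator `∂^m` applied to a polynomial `Q`:
if `m = (m_v)_v`, this is `∏_v (∂/∂x_v)^{m_v}` applied to `Q`. -/
def monDiff {σ : Type*} [DecidableEq σ] (m : σ →₀ ℕ) (Q : MvPolynomial σ ℚ) :
    MvPolynomial σ ℚ :=
  ∑ a ∈ Q.support,
    MvPolynomial.monomial (a - m) (Q.coeff a * ∏ v ∈ m.support, ((a v).descFactorial (m v) : ℚ))

/-- The differential operator `P(∂)` applied to `Q`. -/
def applyDiff {σ : Type*} [DecidableEq σ] (P Q : MvPolynomial σ ℚ) : MvPolynomial σ ℚ :=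
  ∑ m ∈ P.support, P.coeff m • monDiff m Q

/-- The linear span of `Q` and all its partial derivatives (of all orders),
i.e. the space `L_∂[Q]`. -/
def derivSpan {σ : Type*} [DecidableEq σ] (Q : MvPolynomial σ ℚ) :
    Submodule ℚ (MvPolynomial σ ℚ) :=
  Submodule.span ℚ {R | ∃ m : σ →₀ ℕ, R = monDiff m Q}

/-- Strict pseudo-lexicographic order: compare second coordinates first. -/
def plexLT {α : Type*} [LinearOrder α] (a b : α × α) : Prop :=
  a.2 < b.2 ∨ (a.2 = b.2 ∧ a.1 < b.1)

/-- Pseudo-lexicographic order on `ℕ × ℕ`. -/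
def plexLE (a b : ℕ × ℕ) : Prop :=
  a.2 < b.2 ∨ (a.2 = b.2 ∧ a.1 ≤ b.1)

instance : DecidableRel plexLE := fun a b => by unfold plexLE; exact inferInstance
instance : IsTrans (ℕ × ℕ) plexLE := ⟨by intro a b c hab hbc; unfold plexLE at *; omega⟩
instance : IsAntisymm (ℕ × ℕ) plexLE := ⟨by
  intro a b hab hba
  unfold plexLE at hab hba
  have h1 : a.1 = b.1 := by omega
  have h2 : a.2 = b.2 := by omega
  exact Prod.ext h1 h2⟩
instance : IsTotal (ℕ × ℕ) plexLE := ⟨by intro a b; unfold plexLE; omega⟩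

/-- Lexicographic order on `ℕ × ℕ`: compare first coordinates first. -/
def lexLE (a b : ℕ × ℕ) : Prop :=
  a.1 < b.1 ∨ (a.1 = b.1 ∧ a.2 ≤ b.2)

/-- Strict lexicographic order on `ℕ × ℕ`. -/
def lexLT (a b : ℕ × ℕ) : Prop :=
  a.1 < b.1 ∨ (a.1 = b.1 ∧ a.2 < b.2)

instance : DecidableRel lexLE := fun a b => by unfold lexLE; exact inferInstance
instance : IsTrans (ℕ × ℕ) lexLE := ⟨by intro a b c hab hbc; unfold lexLE at *; omega⟩
instance : IsAntisymm (ℕ × ℕ) lexLE := ⟨by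
  intro a b hab hba
  unfold lexLE at hab hba
  have h1 : a.1 = b.1 := by omega
  have h2 : a.2 = b.2 := by omega
  exact Prod.ext h1 h2⟩
instance : IsTotal (ℕ × ℕ) lexLE := ⟨by intro a b; unfold lexLE; omega⟩

/-- The lattice determinant of a list of `n` biexponents:
`Δ = det(x_i^{p_j} y_i^{q_j})`, in the ring `ℚ[x_1,…,x_n,y_1,…,y_n]`,
where `Sum.inl i` stands for `x_{i+1}` and `Sum.inr i` for `y_{i+1}`. -/
def deltaOfList (n : ℕ) (L : Fin n → ℕ × ℕ) : MvPolynomial (Fin n ⊕ Fin n) ℚ :=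
  Matrix.det (Matrix.of fun i j : Fin n =>
    X (Sum.inl i) ^ (L j).1 * X (Sum.inr i) ^ (L j).2)

/-- The lattice determinant of a lattice diagram (finite set of cells), the cells
being listed in increasing pseudo-lexicographic order; `0` if the diagram does not
have exactly `n` cells. -/
def deltaOfFinset (n : ℕ) (D : Finset (ℕ × ℕ)) : MvPolynomial (Fin n ⊕ Fin n) ℚ :=
  if h : D.card = n then
    deltaOfList n fun i => (D.sort plexLE).get ⟨i.1, by rw [Finset.length_sort, h]; exact i.2⟩
  else 0

open scoped Classical in
/-- The lattice determinant of a list of integer biexponents: `0` if some coordinate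
is negative (and `0` if two biexponents coincide, since then the determinant has two
equal columns). -/
def deltaOfListZ (n : ℕ) (L : Fin n → ℤ × ℤ) : MvPolynomial (Fin n ⊕ Fin n) ℚ :=
  if ∀ j, 0 ≤ (L j).1 ∧ 0 ≤ (L j).2 then
    deltaOfList n fun j => ((L j).1.toNat, (L j).2.toNat)
  else 0

/-- The Ferrers diagram of a partition with `h` rows and parts `μ 0 ≥ μ 1 ≥ …`:
the set of cells `(r, c)` with `r < h` and `c < μ r`. -/
def ferrers (h : ℕ) (μ : ℕ → ℕ) : Finset (ℕ × ℕ) :=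
  (Finset.range h ×ˢ Finset.range (μ 0)).filter fun rc => rc.2 < μ rc.1

/-- The shadow of the cell `(i, j)` in the diagram `F`. -/
def shadowF (F : Finset (ℕ × ℕ)) (i j : ℕ) : Finset (ℕ × ℕ) :=
  F.filter fun c => i ≤ c.1 ∧ j ≤ c.2

/-- The space `M^k_{i,j}(X,Y)`: the sum of the spaces `M_{μ/S}` over all `k`-element
subsets `S` of the shadow of `(i,j)` in the diagram `F` (of a partition of `n + k`). -/
def Mk (n k : ℕ) (F : Finset (ℕ × ℕ)) (i j : ℕ) :
    Submodule ℚ (MvPolynomial (Fin n ⊕ Fin n) ℚ) :=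
  ⨆ S ∈ Finset.powersetCard k (shadowF F i j), derivSpan (deltaOfFinset n (F \ S))

/-- The submodule of polynomials involving only the `x` variables
(elements of `Y`-degree `0`). -/
def onlyX (n : ℕ) : Submodule ℚ (MvPolynomial (Fin n ⊕ Fin n) ℚ) :=
  Subalgebra.toSubmodule (MvPolynomial.supported ℚ (Set.range Sum.inl))

/-- The space `M^k_{i,j}(X)`: the elements of `M^k_{i,j}(X,Y)` of `Y`-degree 0. -/
def MkX (n k : ℕ) (F : Finset (ℕ × ℕ)) (i j : ℕ) :
    Submodule ℚ (MvPolynomial (Fin n ⊕ Fin n) ℚ) :=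
  Mk n k F i j ⊓ onlyX n

end

section Aux

set_option linter.unusedSectionVars false

variable {σ : Type*} [DecidableEq σ]

theorem prod_descFactorial_eq_zero_of_not_le {m a : σ →₀ ℕ} (h : ¬ m ≤ a) :
    ∏ v ∈ m.support, ((a v).descFactorial (m v) : ℚ) = 0 := by
  rw [Finsupp.le_def, not_forall] at h
  obtain ⟨v, hv⟩ := h
  rw [not_le] at hv
  have hv0 : m v ≠ 0 := by omega
  refine Finset.prod_eq_zero (i := v) (Finsupp.mem_support_iff.2 hv0) ?_
  rw [Nat.descFactorial_eq_zero_iff_lt.2 hv, Nat.cast_zero]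

theorem coeff_monDiff (m : σ →₀ ℕ) (Q : MvPolynomial σ ℚ) (b : σ →₀ ℕ) :
    (monDiff m Q).coeff b =
      Q.coeff (b + m) * ∏ v ∈ m.support, (((b + m) v).descFactorial (m v) : ℚ) := by
  unfold monDiff
  rw [MvPolynomial.coeff_sum]
  rw [Finset.sum_eq_single (b + m)]
  · rw [MvPolynomial.coeff_monomial, if_pos]
    ext v; simp [Nat.add_sub_cancel]
  · intro a _ hab
    rw [MvPolynomial.coeff_monomial, ite_eq_right_iff]
    intro hsub
    by_cases hle : m ≤ a
    · exact absurd (by rw [← hsub]; ext v; have := Finsupp.le_def.1 hle v; simp; omega) hab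
    · rw [prod_descFactorial_eq_zero_of_not_le hle, mul_zero]
  · intro h
    rw [MvPolynomial.notMem_support_iff.1 h, zero_mul, MvPolynomial.coeff_monomial]
    simp

theorem monDiff_monomial (m a : σ →₀ ℕ) (c : ℚ) :
    monDiff m (monomial a c) =
      monomial (a - m) (c * ∏ v ∈ m.support, ((a v).descFactorial (m v) : ℚ)) := by
  ext b
  rw [coeff_monDiff, MvPolynomial.coeff_monomial, MvPolynomial.coeff_monomial]
  by_cases h : a = b + m
  · subst h
    rw [if_pos rfl, if_pos]
    ext v; simp [Nat.add_sub_cancel]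
  · rw [if_neg h]
    split_ifs with h2
    · by_cases hle : m ≤ a
      · exact absurd (by rw [← h2]; ext v; have := Finsupp.le_def.1 hle v; simp; omega) h
      · rw [prod_descFactorial_eq_zero_of_not_le hle, mul_zero, zero_mul]
    · rw [zero_mul]

theorem monDiff_add (m : σ →₀ ℕ) (Q R : MvPolynomial σ ℚ) :
    monDiff m (Q + R) = monDiff m Q + monDiff m R := by
  ext b; simp [coeff_monDiff, add_mul]

theorem monDiff_zero (m : σ →₀ ℕ) : monDiff m (0 : MvPolynomial σ ℚ) = 0 := by
  ext b; simp [coeff_monDiff]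

theorem monDiff_smul (m : σ →₀ ℕ) (c : ℚ) (Q : MvPolynomial σ ℚ) :
    monDiff m (c • Q) = c • monDiff m Q := by
  ext b; simp [coeff_monDiff, mul_assoc]

theorem monDiff_sum {ι : Type*} (m : σ →₀ ℕ) (s : Finset ι) (f : ι → MvPolynomial σ ℚ) :
    monDiff m (∑ i ∈ s, f i) = ∑ i ∈ s, monDiff m (f i) := by
  classical
  induction s using Finset.cons_induction with
  | empty => simp [monDiff_zero]
  | cons a s ha ih => rw [Finset.sum_cons, monDiff_add, ih, Finset.sum_cons]

theorem monDiff_monomial_mul (m a : σ →₀ ℕ) (c : ℚ) (Q : MvPolynomial σ ℚ)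
    (hQ : ∀ b ∈ Q.support, ∀ v ∈ m.support, b v = 0) :
    monDiff m (monomial a c * Q) =
      monomial (a - m) (c * ∏ v ∈ m.support, ((a v).descFactorial (m v) : ℚ)) * Q := by
  conv_lhs => rw [Q.as_sum]
  rw [Finset.mul_sum, monDiff_sum]
  conv_rhs => rw [Q.as_sum, Finset.mul_sum]
  refine Finset.sum_congr rfl fun b hb => ?_
  rw [MvPolynomial.monomial_mul, monDiff_monomial, MvPolynomial.monomial_mul]
  have h1 : a + b - m = a - m + b := by
    ext v
    by_cases hv : v ∈ m.support
    · have := hQ b hb v hv; simp [this]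
    · have : m v = 0 := Finsupp.notMem_support_iff.1 hv
      simp [this]
  have h2 : ∏ v ∈ m.support, (((a + b) v).descFactorial (m v) : ℚ)
      = ∏ v ∈ m.support, ((a v).descFactorial (m v) : ℚ) := by
    refine Finset.prod_congr rfl fun v hv => ?_
    have := hQ b hb v hv
    simp [this]
  rw [h1, h2]
  ring_nf

theorem prod_X_pow_monomial {ι : Type*} (s : Finset ι) (v : ι → σ) (e : ι → ℕ) :
    (∏ i ∈ s, (X (v i) : MvPolynomial σ ℚ) ^ (e i)) =
      monomial (∑ i ∈ s, Finsupp.single (v i) (e i)) 1 := by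
  classical
  induction s using Finset.cons_induction with
  | empty => simp [MvPolynomial.monomial_zero']
  | cons a s ha ih =>
      rw [Finset.prod_cons, ih, MvPolynomial.X_pow_eq_monomial, MvPolynomial.monomial_mul,
        Finset.sum_cons, one_mul]

theorem applyDiff_monomial_one (m : σ →₀ ℕ) (Q : MvPolynomial σ ℚ) :
    applyDiff (monomial m 1) Q = monDiff m Q := by
  unfold applyDiff
  rw [MvPolynomial.support_monomial, if_neg one_ne_zero, Finset.sum_singleton,
    MvPolynomial.coeff_monomial, if_pos rfl, one_smul]

section DetExpansion

variable {R : Type*} [CommRing R] {n k : ℕ}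

/-- Matrix with the last `k` rows replaced by standard basis vectors at positions `j m`. -/
def basisMat (M : Matrix (Fin (n + k)) (Fin (n + k)) R) (j : Fin k → Fin (n + k)) :
    Matrix (Fin (n + k)) (Fin (n + k)) R :=
  fun i => Fin.addCases (fun i0 => M (Fin.castAdd k i0)) (fun m => Pi.single (j m) 1) i

theorem det_expand_last_rows (M : Matrix (Fin (n + k)) (Fin (n + k)) R) :
    M.det = ∑ j ∈ Fintype.piFinset (fun _ : Fin k => (Finset.univ : Finset (Fin (n + k)))),
      (∏ m : Fin k, M (Fin.natAdd n m) (j m)) * (basisMat M j).det := by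
  classical
  have hrow : (fun i => M i) = fun i =>
      ∑ t ∈ Fin.addCases (fun i0 : Fin n => ({Fin.castAdd k i0} : Finset (Fin (n + k))))
          (fun _ : Fin k => Finset.univ) i,
        Fin.addCases (motive := fun _ => Fin (n + k) → Fin (n + k) → R)
          (fun i0 => fun _ => M (Fin.castAdd k i0))
          (fun m => fun t => M (Fin.natAdd n m) t • (Pi.single t 1 : Fin (n + k) → R)) i t := by
    funext i
    induction i using Fin.addCases with
    | left i0 => simp
    | right m =>
        simp only [Fin.addCases_right]
        have : ∑ t : Fin (n + k), M (Fin.natAdd n m) t • (Pi.single t 1 : Fin (n + k) → R)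
            = ∑ t : Fin (n + k), Pi.single t (M (Fin.natAdd n m) t) := by
          refine Finset.sum_congr rfl fun t _ => ?_
          rw [← Pi.single_smul, smul_eq_mul, mul_one]
        rw [this, Finset.univ_sum_single]
  have key := (Matrix.detRowAlternating (R := R) (n := Fin (n + k))).toMultilinearMap.map_sum_finset
      (fun i t => Fin.addCases (motive := fun _ => Fin (n + k) → Fin (n + k) → R)
          (fun i0 => fun _ => M (Fin.castAdd k i0))
          (fun m => fun t => M (Fin.natAdd n m) t • (Pi.single t 1 : Fin (n + k) → R)) i t)
      (fun i => Fin.addCases (fun i0 : Fin n => ({Fin.castAdd k i0} : Finset (Fin (n + k))))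
          (fun _ : Fin k => Finset.univ) i)
  have hdet : M.det = ∑ r ∈ Fintype.piFinset
      (fun i => Fin.addCases (fun i0 : Fin n => ({Fin.castAdd k i0} : Finset (Fin (n + k))))
          (fun _ : Fin k => Finset.univ) i),
      Matrix.detRowAlternating (fun i =>
        Fin.addCases (motive := fun _ => Fin (n + k) → Fin (n + k) → R)
          (fun i0 => fun _ => M (Fin.castAdd k i0))
          (fun m => fun t => M (Fin.natAdd n m) t • (Pi.single t 1 : Fin (n + k) → R)) i (r i)) := by
    rw [show M.det = Matrix.detRowAlternating (fun i => M i) from rfl, hrow]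
    exact key
  rw [hdet]
  refine Finset.sum_nbij' (fun r => fun m => r (Fin.natAdd n m))
    (fun j => fun i => Fin.addCases (fun i0 => Fin.castAdd k i0) j i) ?_ ?_ ?_ ?_ ?_
  · intro r _; simp
  · intro j _
    simp only [Fintype.mem_piFinset]
    intro i
    induction i using Fin.addCases with
    | left i0 => simp
    | right m => simp
  · intro r hr
    funext i
    induction i using Fin.addCases with
    | left i0 =>
        simp only [Fin.addCases_left]
        have := (Fintype.mem_piFinset.1 hr) (Fin.castAdd k i0)
        simp only [Fin.addCases_left, Finset.mem_singleton] at this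
        exact this.symm
    | right m => simp
  · intro j _
    funext m; simp
  · intro r hr
    have hv : (fun i => Fin.addCases (motive := fun _ => Fin (n + k) → Fin (n + k) → R)
          (fun i0 => fun _ => M (Fin.castAdd k i0))
          (fun m => fun t => M (Fin.natAdd n m) t • (Pi.single t 1 : Fin (n + k) → R)) i (r i))
        = fun i => (Fin.addCases (motive := fun _ => R) (fun _ : Fin n => (1:R))
            (fun m => M (Fin.natAdd n m) (r (Fin.natAdd n m))) i) •
          (basisMat M (fun m => r (Fin.natAdd n m)) i) := by
      funext i
      induction i using Fin.addCases with
      | left i0 => simp [basisMat]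
      | right m => simp [basisMat]
    rw [hv]
    have hms := MultilinearMap.map_smul_univ
      (Matrix.detRowAlternating (R := R) (n := Fin (n + k))).toMultilinearMap
      (fun i => Fin.addCases (motive := fun _ => R) (fun _ : Fin n => (1:R))
        (fun m => M (Fin.natAdd n m) (r (Fin.natAdd n m))) i)
      (basisMat M (fun m => r (Fin.natAdd n m)))
    rw [AlternatingMap.coe_multilinearMap] at hms
    rw [hms, Fin.prod_univ_add]
    simp only [Fin.addCases_left, Fin.addCases_right, Finset.prod_const_one, one_mul,
      smul_eq_mul]
    rfl

end DetExpansion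

section BasisDet

variable {R : Type*} [CommRing R] {n k : ℕ}

theorem card_compl_image (j : Fin k → Fin (n + k)) (hj : Function.Injective j) :
    (Finset.image j Finset.univ)ᶜ.card = n := by
  rw [Finset.card_compl, Finset.card_image_of_injective _ hj, Finset.card_univ]
  simp

/-- Enumeration, in increasing order, of the complement of the range of `j`. -/
noncomputable def complEnum (j : Fin k → Fin (n + k)) (hj : Function.Injective j) :
    Fin n → Fin (n + k) :=
  fun i => (Finset.image j Finset.univ)ᶜ.orderEmbOfFin (card_compl_image j hj) i

theorem complEnum_mem (j : Fin k → Fin (n + k)) (hj : Function.Injective j) (i : Fin n) :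
    complEnum j hj i ∈ (Finset.image j Finset.univ)ᶜ :=
  Finset.orderEmbOfFin_mem _ _ _

theorem complEnum_strictMono (j : Fin k → Fin (n + k)) (hj : Function.Injective j) :
    StrictMono (complEnum j hj) :=
  ((Finset.image j Finset.univ)ᶜ.orderEmbOfFin (card_compl_image j hj)).strictMono

theorem det_basisMat_of_injective (M : Matrix (Fin (n + k)) (Fin (n + k)) R)
    (j : Fin k → Fin (n + k)) (hj : Function.Injective j) :
    ∃ ε : ℤˣ, (basisMat M j).det =
      (ε : ℤ) • (Matrix.of fun i i' : Fin n =>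
        M (Fin.castAdd k i) (complEnum j hj i')).det := by
  classical
  set o := complEnum j hj with ho
  set φ : Fin n ⊕ Fin k → Fin (n + k) := Sum.elim o j with hφ
  have hinj : Function.Injective φ := by
    intro s t hst
    rcases s with i | m <;> rcases t with i' | m'
    · exact congrArg Sum.inl ((complEnum_strictMono j hj).injective hst)
    · exfalso
      have h1 := complEnum_mem j hj i
      rw [Finset.mem_compl] at h1
      exact h1 (by rw [show complEnum j hj i = j m' from hst]; exact Finset.mem_image_of_mem _ (Finset.mem_univ _))
    · exfalso
      have h1 := complEnum_mem j hj i'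
      rw [Finset.mem_compl] at h1
      exact h1 (by rw [show complEnum j hj i' = j m from hst.symm]; exact Finset.mem_image_of_mem _ (Finset.mem_univ _))
    · exact congrArg Sum.inr (hj hst)
  have hbij : Function.Bijective φ :=
    (Fintype.bijective_iff_injective_and_card φ).2 ⟨hinj, by simp⟩
  set eJ := Equiv.ofBijective φ hbij with heJ
  set π : Equiv.Perm (Fin (n + k)) := eJ.symm.trans finSumFinEquiv with hπ
  set A : Matrix (Fin n) (Fin n) R := Matrix.of fun i i' => M (Fin.castAdd k i) (eJ (Sum.inl i'))
  set B : Matrix (Fin n) (Fin k) R := Matrix.of fun i m => M (Fin.castAdd k i) (eJ (Sum.inr m))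
  have hNB : basisMat M j =
      ((Matrix.fromBlocks A B 0 1).submatrix finSumFinEquiv.symm finSumFinEquiv.symm).submatrix
        id π := by
    funext r t
    have hπt : finSumFinEquiv.symm (π t) = eJ.symm t := by
      simp [hπ]
    show basisMat M j r t = (Matrix.fromBlocks A B 0 1) (finSumFinEquiv.symm r)
      (finSumFinEquiv.symm (π t))
    rw [hπt]
    induction r using Fin.addCases with
    | left i0 =>
        rw [finSumFinEquiv_symm_apply_castAdd]
        have hL : basisMat M j (Fin.castAdd k i0) t = M (Fin.castAdd k i0) t := by
          simp [basisMat]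
        rw [hL]
        rcases hs : eJ.symm t with i' | m'
        · have ht : eJ (Sum.inl i') = t := by rw [← hs]; exact eJ.apply_symm_apply t
          simp [Matrix.fromBlocks, A, ht]
        · have ht : eJ (Sum.inr m') = t := by rw [← hs]; exact eJ.apply_symm_apply t
          simp [Matrix.fromBlocks, B, ht]
    | right m =>
        rw [finSumFinEquiv_symm_apply_natAdd]
        have hL : basisMat M j (Fin.natAdd n m) t = (Pi.single (j m) (1:R) : Fin (n + k) → R) t := by
          simp [basisMat]
        rw [hL]
        rcases hs : eJ.symm t with i' | m'
        · have ht : eJ (Sum.inl i') = t := by rw [← hs]; exact eJ.apply_symm_apply t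
          have htC : t ∈ (Finset.image j Finset.univ)ᶜ := by
            rw [← ht]; exact complEnum_mem j hj i'
          have htj : t ≠ j m := by
            intro hc
            rw [Finset.mem_compl] at htC
            exact htC (by rw [hc]; exact Finset.mem_image_of_mem _ (Finset.mem_univ _))
          simp [Matrix.fromBlocks, Pi.single_apply, htj]
        · have ht : eJ (Sum.inr m') = t := by rw [← hs]; exact eJ.apply_symm_apply t
          have : t = j m' := ht.symm
          subst this
          simp [Matrix.fromBlocks, Pi.single_apply, Matrix.one_apply, hj.eq_iff, eq_comm]
  refine ⟨Equiv.Perm.sign π, ?_⟩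
  rw [hNB, Matrix.det_permute', Matrix.det_submatrix_equiv_self,
    Matrix.det_fromBlocks_zero₂₁, Matrix.det_one, mul_one]
  rw [zsmul_eq_mul]
  norm_cast

theorem det_basisMat_of_not_injective (M : Matrix (Fin (n + k)) (Fin (n + k)) R)
    (j : Fin k → Fin (n + k)) (hj : ¬ Function.Injective j) :
    (basisMat M j).det = 0 := by
  rw [Function.not_injective_iff] at hj
  obtain ⟨m, m', hmm', hne⟩ := hj
  refine Matrix.det_zero_of_row_eq (i := Fin.natAdd n m) (j := Fin.natAdd n m') ?_ ?_
  · intro hc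
    apply hne
    have := congrArg Fin.val hc
    simp only [Fin.natAdd] at this
    exact Fin.ext (by omega)
  · show basisMat M j (Fin.natAdd n m) = basisMat M j (Fin.natAdd n m')
    simp [basisMat, hmm']

end BasisDet

section SortedSub

variable {n k : ℕ}

theorem sortGet_injective (F : Finset (ℕ × ℕ)) (hF : F.card = n + k)
    (L : Fin (n + k) → ℕ × ℕ)
    (hL : ∀ i : Fin (n + k), L i = (F.sort plexLE).get
      ⟨i.1, by rw [Finset.length_sort, hF]; exact i.2⟩) :
    Function.Injective L := by
  intro a b hab
  have hnd := F.sort_nodup plexLE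
  rw [hL a, hL b] at hab
  have h2 := (List.nodup_iff_injective_get.1 hnd) hab
  have h3 : (a : ℕ) = b := congrArg Fin.val (α := Fin (F.sort plexLE).length) h2
  exact Fin.ext h3

theorem sortGet_mem (F : Finset (ℕ × ℕ)) (hF : F.card = n + k)
    (L : Fin (n + k) → ℕ × ℕ)
    (hL : ∀ i : Fin (n + k), L i = (F.sort plexLE).get
      ⟨i.1, by rw [Finset.length_sort, hF]; exact i.2⟩) (i : Fin (n + k)) :
    L i ∈ F := by
  rw [← Finset.mem_sort plexLE, hL i]
  exact List.get_mem _ _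

theorem sortGet_mono (F : Finset (ℕ × ℕ)) (hF : F.card = n + k)
    (L : Fin (n + k) → ℕ × ℕ)
    (hL : ∀ i : Fin (n + k), L i = (F.sort plexLE).get
      ⟨i.1, by rw [Finset.length_sort, hF]; exact i.2⟩)
    {a b : Fin (n + k)} (h : a < b) : plexLE (L a) (L b) := by
  rw [hL a, hL b]
  exact List.Pairwise.rel_get_of_lt (F.pairwise_sort plexLE) h

theorem sortGet_surj (F : Finset (ℕ × ℕ)) (hF : F.card = n + k)
    (L : Fin (n + k) → ℕ × ℕ)
    (hL : ∀ i : Fin (n + k), L i = (F.sort plexLE).get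
      ⟨i.1, by rw [Finset.length_sort, hF]; exact i.2⟩)
    {x : ℕ × ℕ} (hx : x ∈ F) : ∃ i, L i = x := by
  rw [← Finset.mem_sort plexLE] at hx
  obtain ⟨t, ht⟩ := List.mem_iff_get.1 hx
  have htlen : (t : ℕ) < n + k := by
    have h4 := t.2
    have hlen : (F.sort plexLE).length = n + k := by rw [Finset.length_sort, hF]
    omega
  refine ⟨⟨t.1, htlen⟩, (hL _).trans (.trans ?_ ht)⟩
  congr 1

theorem sorted_sublist (F : Finset (ℕ × ℕ)) (hF : F.card = n + k)
    (L : Fin (n + k) → ℕ × ℕ)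
    (hL : ∀ i : Fin (n + k), L i = (F.sort plexLE).get
      ⟨i.1, by rw [Finset.length_sort, hF]; exact i.2⟩)
    (j : Fin k → Fin (n + k)) (hj : Function.Injective j) :
    Finset.sort (F \ Finset.image (fun m => L (j m)) Finset.univ) plexLE
      = List.ofFn (fun i => L (complEnum j hj i)) := by
  classical
  have hLinj := sortGet_injective F hF L hL
  have hinj2 : Function.Injective (fun i => L (complEnum j hj i)) :=
    hLinj.comp (complEnum_strictMono j hj).injective
  refine (fun hp hs => (List.Perm.eq_of_pairwise' hs (Finset.pairwise_sort _ _) hp).symm) ?_ ?_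
  · refine List.perm_of_nodup_nodup_toFinset_eq (List.nodup_ofFn.2 hinj2)
      (Finset.sort_nodup _ _) ?_
    rw [Finset.sort_toFinset]
    ext x
    rw [List.mem_toFinset, List.mem_ofFn, Finset.mem_sdiff]
    constructor
    · rintro ⟨i, rfl⟩
      refine ⟨sortGet_mem F hF L hL _, ?_⟩
      intro hmem
      obtain ⟨m, _, hm⟩ := Finset.mem_image.1 hmem
      have : j m = complEnum j hj i := hLinj hm
      have hc := complEnum_mem j hj i
      rw [Finset.mem_compl, ← this] at hc
      exact hc (Finset.mem_image_of_mem _ (Finset.mem_univ _))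
    · rintro ⟨hxF, hxS⟩
      obtain ⟨t, rfl⟩ := sortGet_surj F hF L hL hxF
      have ht : t ∈ (Finset.image j Finset.univ)ᶜ := by
        rw [Finset.mem_compl]
        intro hc
        obtain ⟨m, _, hm⟩ := Finset.mem_image.1 hc
        exact hxS (Finset.mem_image.2 ⟨m, Finset.mem_univ _, by rw [hm]⟩)
      have : t ∈ Set.range ((Finset.image j Finset.univ)ᶜ.orderEmbOfFin (card_compl_image j hj)) := by
        rw [Finset.range_orderEmbOfFin]
        exact ht
      obtain ⟨i, hi⟩ := this
      exact ⟨i, congrArg L hi⟩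
  · rw [List.pairwise_ofFn]
    intro a b hab
    exact sortGet_mono F hF L hL ((complEnum_strictMono j hj) hab)

end SortedSub

section ExpHelpers

variable {n k : ℕ}

/-- Sum of singles on `inl` of the last block, evaluated. -/
theorem s1_apply (u : Fin k → ℕ) (v : Fin (n + k) ⊕ Fin (n + k)) :
    (∑ m : Fin k, Finsupp.single (Sum.inl (Fin.natAdd n m) : Fin (n + k) ⊕ Fin (n + k)) (u m)) v
      = Sum.elim
          (fun x : Fin (n + k) => if h : n ≤ (x : ℕ) then u ⟨(x : ℕ) - n, by have := x.isLt; omega⟩ else 0)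
          (fun _ => 0) v := by
  classical
  rcases v with x | x
  · rw [Finsupp.finset_sum_apply]
    simp only [Finsupp.single_apply, Sum.elim_inl]
    by_cases hx : n ≤ (x : ℕ)
    · rw [dif_pos hx]
      rw [Finset.sum_eq_single (⟨(x : ℕ) - n, by have := x.isLt; omega⟩ : Fin k)]
      · rw [if_pos]
        congr 1
        apply Fin.ext
        show n + ((x : ℕ) - n) = (x : ℕ)
        omega
      · intro m _ hm
        rw [if_neg]
        intro hc
        apply hm
        have : n + (m : ℕ) = (x : ℕ) := by
          have := congrArg (fun y => Sum.elim Fin.val Fin.val y) hc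
          simpa using this
        apply Fin.ext
        show (m : ℕ) = (x : ℕ) - n
        omega
      · intro hmem
        exact absurd (Finset.mem_univ _) hmem
    · rw [dif_neg hx]
      refine Finset.sum_eq_zero fun m _ => ?_
      rw [if_neg]
      intro hc
      have : n + (m : ℕ) = (x : ℕ) := by
        have := congrArg (fun y => Sum.elim Fin.val Fin.val y) hc
        simpa using this
      omega
  · rw [Finsupp.finset_sum_apply]
    simp only [Sum.elim_inr]
    refine Finset.sum_eq_zero fun m _ => ?_
    rw [Finsupp.single_apply, if_neg]
    simp

theorem s2_apply (w : Fin k → ℕ) (v : Fin (n + k) ⊕ Fin (n + k)) :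
    (∑ m : Fin k, Finsupp.single (Sum.inr (Fin.natAdd n m) : Fin (n + k) ⊕ Fin (n + k)) (w m)) v
      = Sum.elim (fun _ => 0)
          (fun x : Fin (n + k) => if h : n ≤ (x : ℕ) then w ⟨(x : ℕ) - n, by have := x.isLt; omega⟩ else 0)
          v := by
  classical
  rcases v with x | x
  · rw [Finsupp.finset_sum_apply]
    simp only [Sum.elim_inl]
    refine Finset.sum_eq_zero fun m _ => ?_
    rw [Finsupp.single_apply, if_neg]
    simp
  · rw [Finsupp.finset_sum_apply]
    simp only [Finsupp.single_apply, Sum.elim_inr]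
    by_cases hx : n ≤ (x : ℕ)
    · rw [dif_pos hx]
      rw [Finset.sum_eq_single (⟨(x : ℕ) - n, by have := x.isLt; omega⟩ : Fin k)]
      · rw [if_pos]
        congr 1
        apply Fin.ext
        show n + ((x : ℕ) - n) = (x : ℕ)
        omega
      · intro m _ hm
        rw [if_neg]
        intro hc
        apply hm
        have : n + (m : ℕ) = (x : ℕ) := by
          have := congrArg (fun y => Sum.elim Fin.val Fin.val y) hc
          simpa using this
        apply Fin.ext
        show (m : ℕ) = (x : ℕ) - n
        omega
      · intro hmem
        exact absurd (Finset.mem_univ _) hmem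
    · rw [dif_neg hx]
      refine Finset.sum_eq_zero fun m _ => ?_
      rw [if_neg]
      intro hc
      have : n + (m : ℕ) = (x : ℕ) := by
        have := congrArg (fun y => Sum.elim Fin.val Fin.val y) hc
        simpa using this
      omega

/-- The "biexponent" Finsupp attached to two tuples on the last block. -/
noncomputable def expPair (n k : ℕ) (u w : Fin k → ℕ) : (Fin (n + k) ⊕ Fin (n + k)) →₀ ℕ :=
  (∑ m : Fin k, Finsupp.single (Sum.inl (Fin.natAdd n m)) (u m))
    + ∑ m : Fin k, Finsupp.single (Sum.inr (Fin.natAdd n m)) (w m)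

theorem expPair_apply (u w : Fin k → ℕ) (v : Fin (n + k) ⊕ Fin (n + k)) :
    expPair n k u w v = Sum.elim
      (fun x : Fin (n + k) => if h : n ≤ (x : ℕ) then u ⟨(x : ℕ) - n, by have := x.isLt; omega⟩ else 0)
      (fun x : Fin (n + k) => if h : n ≤ (x : ℕ) then w ⟨(x : ℕ) - n, by have := x.isLt; omega⟩ else 0)
      v := by
  rw [expPair, Finsupp.add_apply, s1_apply, s2_apply]
  rcases v with x | x <;> simp

theorem expPair_apply_inl (u w : Fin k → ℕ) (m : Fin k) :
    expPair n k u w (Sum.inl (Fin.natAdd n m)) = u m := by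
  rw [expPair_apply]
  have hge : n ≤ ((Fin.natAdd n m : Fin (n + k)) : ℕ) := by simp [Fin.natAdd]
  simp only [Sum.elim_inl, dif_pos hge]
  congr 1
  apply Fin.ext
  show ((Fin.natAdd n m : Fin (n + k)) : ℕ) - n = (m : ℕ)
  simp [Fin.natAdd]

theorem expPair_apply_inr (u w : Fin k → ℕ) (m : Fin k) :
    expPair n k u w (Sum.inr (Fin.natAdd n m)) = w m := by
  rw [expPair_apply]
  have hge : n ≤ ((Fin.natAdd n m : Fin (n + k)) : ℕ) := by simp [Fin.natAdd]
  simp only [Sum.elim_inr, dif_pos hge]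
  congr 1
  apply Fin.ext
  show ((Fin.natAdd n m : Fin (n + k)) : ℕ) - n = (m : ℕ)
  simp [Fin.natAdd]

theorem expPair_apply_castAdd_eq_zero (u w : Fin k → ℕ)
    (v : Fin (n + k) ⊕ Fin (n + k)) (hv : v ∈ Set.range (Sum.map (Fin.castAdd k) (Fin.castAdd k) : Fin n ⊕ Fin n → Fin (n + k) ⊕ Fin (n + k))) :
    expPair n k u w v = 0 := by
  obtain ⟨s, rfl⟩ := hv
  rcases s with x | x
  · rw [Sum.map_inl, expPair_apply, Sum.elim_inl, dif_neg]
    have := x.isLt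
    show ¬ n ≤ ((Fin.castAdd k x : Fin (n + k)) : ℕ)
    simp only [Fin.coe_castAdd]
    omega
  · rw [Sum.map_inr, expPair_apply, Sum.elim_inr, dif_neg]
    have := x.isLt
    show ¬ n ≤ ((Fin.castAdd k x : Fin (n + k)) : ℕ)
    simp only [Fin.coe_castAdd]
    omega

theorem expPair_support_notin_castAdd (u w : Fin k → ℕ)
    (v : (Fin (n + k) ⊕ Fin (n + k))) (hv : v ∈ (expPair n k u w).support) :
    v ∉ Set.range (Sum.map (Fin.castAdd k) (Fin.castAdd k) : Fin n ⊕ Fin n → Fin (n + k) ⊕ Fin (n + k)) := by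
  intro hc
  rw [Finsupp.mem_support_iff] at hv
  exact hv (expPair_apply_castAdd_eq_zero u w v hc)

theorem expPair_tsub (u w u' w' : Fin k → ℕ) :
    expPair n k u w - expPair n k u' w'
      = expPair n k (fun m => u m - u' m) (fun m => w m - w' m) := by
  ext v
  rw [Finsupp.tsub_apply, expPair_apply, expPair_apply, expPair_apply]
  rcases v with x | x <;> simp only [Sum.elim_inl, Sum.elim_inr] <;> split <;> rfl

theorem mapDomain_expPair (u w : Fin k → ℕ) :
    Finsupp.mapDomain (Sum.map (Fin.natAdd n) (Fin.natAdd n))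
        ((∑ m : Fin k, Finsupp.single (Sum.inl m : Fin k ⊕ Fin k) (u m))
          + ∑ m : Fin k, Finsupp.single (Sum.inr m : Fin k ⊕ Fin k) (w m))
      = expPair n k u w := by
  rw [Finsupp.mapDomain_add, Finsupp.mapDomain_finset_sum, Finsupp.mapDomain_finset_sum]
  rw [expPair]
  congr 1 <;> refine Finset.sum_congr rfl fun m _ => ?_ <;> rw [Finsupp.mapDomain_single] <;> rfl

end ExpHelpers

section DeltaHelpers

variable {n k : ℕ}

theorem summap_castAdd_injective :
    Function.Injective (Sum.map (Fin.castAdd k) (Fin.castAdd k) : Fin n ⊕ Fin n → Fin (n + k) ⊕ Fin (n + k)) := by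
  intro s t hst
  rcases s with x | x <;> rcases t with y | y <;> simp only [Sum.map_inl, Sum.map_inr,
    Sum.inl.injEq, Sum.inr.injEq] at hst ⊢
  · exact Fin.ext (by have := congrArg Fin.val hst; simpa using this)
  · exact absurd hst (by simp)
  · exact absurd hst (by simp)
  · exact Fin.ext (by have := congrArg Fin.val hst; simpa using this)

theorem rename_deltaOfList (L' : Fin n → ℕ × ℕ) :
    MvPolynomial.rename (Sum.map (Fin.castAdd k) (Fin.castAdd k)) (deltaOfList n L')
      = (Matrix.of fun i i' : Fin n =>
          (X (Sum.inl (Fin.castAdd k i)) ^ (L' i').1 * X (Sum.inr (Fin.castAdd k i)) ^ (L' i').2 :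
            MvPolynomial (Fin (n + k) ⊕ Fin (n + k)) ℚ)).det := by
  rw [deltaOfList]
  rw [AlgHom.map_det]
  congr 1
  funext i i'
  simp [Matrix.map_apply]

theorem deltaOfFinset_sdiff (F : Finset (ℕ × ℕ)) (hF : F.card = n + k)
    (L : Fin (n + k) → ℕ × ℕ)
    (hL : ∀ i : Fin (n + k), L i = (F.sort plexLE).get
      ⟨i.1, by rw [Finset.length_sort, hF]; exact i.2⟩)
    (j : Fin k → Fin (n + k)) (hj : Function.Injective j) :
    deltaOfFinset n (F \ Finset.image (fun m => L (j m)) Finset.univ)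
      = deltaOfList n (fun i => L (complEnum j hj i)) := by
  classical
  have hLinj := sortGet_injective F hF L hL
  set S := Finset.image (fun m => L (j m)) Finset.univ with hS
  have hSsub : S ⊆ F := by
    intro x hx
    obtain ⟨m, _, rfl⟩ := Finset.mem_image.1 hx
    exact sortGet_mem F hF L hL _
  have hScard : S.card = k := by
    have hinj : Function.Injective (fun m => L (j m)) := fun a b hab => hj (hLinj hab)
    rw [hS, Finset.card_image_of_injective _ hinj, Finset.card_univ]
    simp
  have hcard' : (F \ S).card = n := by
    rw [Finset.card_sdiff_of_subset hSsub, hF, hScard]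
    omega
  rw [deltaOfFinset, dif_pos hcard']
  congr 1
  funext i
  have hsort := sorted_sublist F hF L hL j hj
  rw [List.get_of_eq hsort, List.get_ofFn]
  congr 1

end DeltaHelpers

section PairSingle

variable {k : ℕ}

theorem pairSingle_apply_inl (u w : Fin k → ℕ) (m0 : Fin k) :
    ((∑ m : Fin k, Finsupp.single (Sum.inl m : Fin k ⊕ Fin k) (u m))
      + ∑ m : Fin k, Finsupp.single (Sum.inr m : Fin k ⊕ Fin k) (w m)) (Sum.inl m0) = u m0 := by
  classical
  rw [Finsupp.add_apply, Finsupp.finset_sum_apply, Finsupp.finset_sum_apply]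
  simp [Finsupp.single_apply]

theorem pairSingle_apply_inr (u w : Fin k → ℕ) (m0 : Fin k) :
    ((∑ m : Fin k, Finsupp.single (Sum.inl m : Fin k ⊕ Fin k) (u m))
      + ∑ m : Fin k, Finsupp.single (Sum.inr m : Fin k ⊕ Fin k) (w m)) (Sum.inr m0) = w m0 := by
  classical
  rw [Finsupp.add_apply, Finsupp.finset_sum_apply, Finsupp.finset_sum_apply]
  simp [Finsupp.single_apply]

end PairSingle


end Aux

set_option maxHeartbeats 1000000 in
/-- Differentiating `Δ_μ(X_{n+k};Y_{n+k})` by the monomial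
`x_{n+1}^{a₁} y_{n+1}^{b₁} ⋯ x_{n+k}^{a_k} y_{n+k}^{b_k}` attached to `k` distinct
cells `(a₁,b₁) < ⋯ < (a_k,b_k)` of `μ` (in increasing lexicographic order) yields
`c · Δ_{μ/{(a₁,b₁),…,(a_k,b_k)}}` (`c ≠ 0`) plus a combination, with coefficients that
are polynomials in the last `k` pairs of variables vanishing at `0`, of polynomials
`Δ_{μ/S'}` where the cells of `S'` lie in the shadows of the corresponding cells. -/
theorem statement7 (n k h : ℕ) (μ : ℕ → ℕ)
    (hanti : Antitone μ) (hpos : ∀ r, r < h → 0 < μ r) (hzero : ∀ r, h ≤ r → μ r = 0)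
    (hcard : (ferrers h μ).card = n + k)
    (cells : Fin k → ℕ × ℕ) (hcells : ∀ m, cells m ∈ ferrers h μ)
    (hsorted : ∀ a b : Fin k, a < b → lexLT (cells a) (cells b)) :
    ∃ c : ℚ, c ≠ 0 ∧
    ∃ (T : Finset (Fin k → ℕ × ℕ))
      (coef : (Fin k → ℕ × ℕ) → MvPolynomial (Fin (n + k) ⊕ Fin (n + k)) ℚ),
      applyDiff
          (∏ m : Fin k,
            (X (Sum.inl (Fin.natAdd n m)) ^ (cells m).1
              * X (Sum.inr (Fin.natAdd n m)) ^ (cells m).2))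
          (deltaOfFinset (n + k) (ferrers h μ))
        = c • MvPolynomial.rename (Sum.map (Fin.castAdd k) (Fin.castAdd k))
              (deltaOfFinset n (ferrers h μ \ Finset.image cells Finset.univ))
          + ∑ f ∈ T, coef f
              * MvPolynomial.rename (Sum.map (Fin.castAdd k) (Fin.castAdd k))
                (deltaOfFinset n (ferrers h μ \ Finset.image f Finset.univ)) ∧
      ∀ f ∈ T,
        Function.Injective f ∧
        (∀ m : Fin k, f m ∈ ferrers h μ ∧ (cells m).1 ≤ (f m).1 ∧ (cells m).2 ≤ (f m).2) ∧
        ∃ g : MvPolynomial (Fin k ⊕ Fin k) ℚ,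
          coef f = MvPolynomial.rename (Sum.map (Fin.natAdd n) (Fin.natAdd n)) g ∧
          MvPolynomial.constantCoeff g = 0 := by
  classical
  set F := ferrers h μ with hFdef
  set L : Fin (n + k) → ℕ × ℕ := fun i => (F.sort plexLE).get
      ⟨i.1, by rw [Finset.length_sort, hcard]; exact i.2⟩ with hLdef
  have hL : ∀ i : Fin (n + k), L i = (F.sort plexLE).get
      ⟨i.1, by rw [Finset.length_sort, hcard]; exact i.2⟩ := fun i => rfl
  have hLinj : Function.Injective L := sortGet_injective F hcard L hL
  set Mm : Matrix (Fin (n + k)) (Fin (n + k)) (MvPolynomial (Fin (n + k) ⊕ Fin (n + k)) ℚ) :=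
    Matrix.of fun i j => X (Sum.inl i) ^ (L j).1 * X (Sum.inr i) ^ (L j).2 with hMm
  have hΔ : deltaOfFinset (n + k) F = Mm.det := by
    rw [deltaOfFinset, dif_pos hcard]
    rfl
  set m0 : (Fin (n + k) ⊕ Fin (n + k)) →₀ ℕ :=
    expPair n k (fun m => (cells m).1) (fun m => (cells m).2) with hm0
  have hP : (∏ m : Fin k, (X (Sum.inl (Fin.natAdd n m)) ^ (cells m).1
      * X (Sum.inr (Fin.natAdd n m)) ^ (cells m).2 :
        MvPolynomial (Fin (n + k) ⊕ Fin (n + k)) ℚ)) = monomial m0 1 := by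
    rw [Finset.prod_mul_distrib, prod_X_pow_monomial, prod_X_pow_monomial,
      MvPolynomial.monomial_mul, one_mul]
    rfl
  have hstart : applyDiff (∏ m : Fin k, (X (Sum.inl (Fin.natAdd n m)) ^ (cells m).1
        * X (Sum.inr (Fin.natAdd n m)) ^ (cells m).2)) (deltaOfFinset (n + k) F)
      = monDiff m0 Mm.det := by
    rw [hP, hΔ, applyDiff_monomial_one]
  have hexp : monDiff m0 Mm.det = ∑ j ∈ Fintype.piFinset
      (fun _ : Fin k => (Finset.univ : Finset (Fin (n + k)))),
      monDiff m0 ((∏ m : Fin k, Mm (Fin.natAdd n m) (j m)) * (basisMat Mm j).det) := by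
    rw [det_expand_last_rows, monDiff_sum]
  set aOf : (Fin k → Fin (n + k)) → ((Fin (n + k) ⊕ Fin (n + k)) →₀ ℕ) :=
    fun j => expPair n k (fun m => (L (j m)).1) (fun m => (L (j m)).2) with haOf
  set cDF : (Fin k → Fin (n + k)) → ℚ :=
    fun j => ∏ v ∈ m0.support, (((aOf j) v).descFactorial (m0 v) : ℚ) with hcDFdef
  have hEj : ∀ j : Fin k → Fin (n + k),
      (∏ m : Fin k, Mm (Fin.natAdd n m) (j m)) = monomial (aOf j) 1 := by
    intro j
    show (∏ m : Fin k, (X (Sum.inl (Fin.natAdd n m)) ^ (L (j m)).1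
      * X (Sum.inr (Fin.natAdd n m)) ^ (L (j m)).2 :
        MvPolynomial (Fin (n + k) ⊕ Fin (n + k)) ℚ)) = _
    rw [Finset.prod_mul_distrib, prod_X_pow_monomial, prod_X_pow_monomial,
      MvPolynomial.monomial_mul, one_mul]
    rfl
  have hdetN : ∀ (j : Fin k → Fin (n + k)) (hj : Function.Injective j), ∃ ε : ℤˣ,
      (basisMat Mm j).det = (ε : ℤ) • (MvPolynomial.rename
        (Sum.map (Fin.castAdd k) (Fin.castAdd k))
        (deltaOfFinset n (F \ Finset.image (fun m => L (j m)) Finset.univ))) := by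
    intro j hj
    obtain ⟨ε, hε⟩ := det_basisMat_of_injective Mm j hj
    refine ⟨ε, hε.trans ?_⟩
    rw [deltaOfFinset_sdiff F hcard L hL j hj, rename_deltaOfList]
    rfl
  have hterm : ∀ (j : Fin k → Fin (n + k)), Function.Injective j →
      monDiff m0 ((∏ m : Fin k, Mm (Fin.natAdd n m) (j m)) * (basisMat Mm j).det)
        = monomial (aOf j - m0) (cDF j) * (basisMat Mm j).det := by
    intro j hj
    rw [hEj j]
    obtain ⟨ε, hε⟩ := hdetN j hj
    have hQ : ∀ b ∈ ((basisMat Mm j).det).support,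
        ∀ v ∈ m0.support, b v = 0 := by
      intro b hb v hv
      rw [hε] at hb
      have hb2 := MvPolynomial.support_smul hb
      rw [MvPolynomial.support_rename_of_injective summap_castAdd_injective] at hb2
      obtain ⟨b', _, rfl⟩ := Finset.mem_image.1 hb2
      refine Finsupp.mapDomain_notin_range _ _ ?_
      exact expPair_support_notin_castAdd _ _ v hv
    rw [monDiff_monomial_mul m0 (aOf j) 1 _ hQ, one_mul]
  set T0 : Finset (Fin k → Fin (n + k)) := (Fintype.piFinset
      (fun _ : Fin k => (Finset.univ : Finset (Fin (n + k))))).filter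
      (fun j => Function.Injective j ∧
        ∀ m, (cells m).1 ≤ (L (j m)).1 ∧ (cells m).2 ≤ (L (j m)).2) with hT0
  have hzero : ∀ j ∈ Fintype.piFinset
      (fun _ : Fin k => (Finset.univ : Finset (Fin (n + k)))), j ∉ T0 →
      monDiff m0 ((∏ m : Fin k, Mm (Fin.natAdd n m) (j m)) * (basisMat Mm j).det) = 0 := by
    intro j hjmem hjT0
    by_cases hj : Function.Injective j
    · have hsh : ¬ ∀ m, (cells m).1 ≤ (L (j m)).1 ∧ (cells m).2 ≤ (L (j m)).2 :=
        fun hc => hjT0 (Finset.mem_filter.2 ⟨hjmem, hj, hc⟩)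
      rw [hterm j hj]
      push_neg at hsh
      obtain ⟨m, hm⟩ := hsh
      have hcdf : cDF j = 0 := by
        simp only [hcDFdef]
        by_cases h1 : (cells m).1 ≤ (L (j m)).1
        · have h2 : (L (j m)).2 < (cells m).2 := by
            have := hm h1; omega
          refine Finset.prod_eq_zero (i := Sum.inr (Fin.natAdd n m)) ?_ ?_
          · rw [Finsupp.mem_support_iff, hm0, expPair_apply_inr]
            omega
          · simp only [hm0, haOf]
            rw [expPair_apply_inr, expPair_apply_inr,
              Nat.descFactorial_eq_zero_iff_lt.2 h2, Nat.cast_zero]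
        · push_neg at h1
          refine Finset.prod_eq_zero (i := Sum.inl (Fin.natAdd n m)) ?_ ?_
          · rw [Finsupp.mem_support_iff, hm0, expPair_apply_inl]
            omega
          · simp only [hm0, haOf]
            rw [expPair_apply_inl, expPair_apply_inl,
              Nat.descFactorial_eq_zero_iff_lt.2 h1, Nat.cast_zero]
      rw [hcdf, MvPolynomial.monomial_zero, zero_mul]
    · rw [hEj j, det_basisMat_of_not_injective Mm j hj, mul_zero, monDiff_zero]
  have hsum : monDiff m0 Mm.det = ∑ j ∈ T0,
      monDiff m0 ((∏ m : Fin k, Mm (Fin.natAdd n m) (j m)) * (basisMat Mm j).det) := by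
    rw [hexp]
    exact (Finset.sum_subset (Finset.filter_subset _ _) hzero).symm
  -- the distinguished index function j0
  have hcellsinj : Function.Injective cells := by
    intro a b hab
    by_contra hne
    rcases lt_or_gt_of_ne (show a ≠ b from fun hc => hne hc) with hlt | hgt
    · have := hsorted a b hlt
      rw [hab] at this
      unfold lexLT at this
      omega
    · have := hsorted b a hgt
      rw [hab] at this
      unfold lexLT at this
      omega
  have hj0ex : ∀ m, ∃ t, L t = cells m := fun m => sortGet_surj F hcard L hL (hcells m)
  set j0 : Fin k → Fin (n + k) := fun m => (hj0ex m).choose with hj0def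
  have hLj0 : ∀ m, L (j0 m) = cells m := fun m => (hj0ex m).choose_spec
  have hj0inj : Function.Injective j0 := by
    intro a b hab
    apply hcellsinj
    rw [← hLj0 a, ← hLj0 b, hab]
  have hj0T0 : j0 ∈ T0 := Finset.mem_filter.2 ⟨by simp [Fintype.mem_piFinset], hj0inj,
    fun m => by rw [hLj0]; exact ⟨le_refl _, le_refl _⟩⟩
  have haj0 : aOf j0 = m0 := by
    have hu : (fun m => (L (j0 m)).1) = (fun m => (cells m).1) :=
      funext fun m => by rw [hLj0 m]
    have hw : (fun m => (L (j0 m)).2) = (fun m => (cells m).2) :=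
      funext fun m => by rw [hLj0 m]
    show expPair n k (fun m => (L (j0 m)).1) (fun m => (L (j0 m)).2)
      = expPair n k (fun m => (cells m).1) (fun m => (cells m).2)
    rw [hu, hw]
  obtain ⟨ε0, hε0⟩ := hdetN j0 hj0inj
  have hcdf0 : cDF j0 ≠ 0 := by
    simp only [hcDFdef]
    rw [haj0]
    refine ne_of_gt (Finset.prod_pos ?_)
    intro v hv
    rw [Nat.descFactorial_self]
    exact_mod_cast Nat.factorial_pos _
  refine ⟨((ε0 : ℤ) : ℚ) * cDF j0,
    mul_ne_zero (Int.cast_ne_zero.2 (Units.ne_zero ε0)) hcdf0, ?_⟩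
  have hterm0 : monDiff m0 ((∏ m : Fin k, Mm (Fin.natAdd n m) (j0 m)) * (basisMat Mm j0).det)
      = (((ε0 : ℤ) : ℚ) * cDF j0) • MvPolynomial.rename
          (Sum.map (Fin.castAdd k) (Fin.castAdd k))
          (deltaOfFinset n (F \ Finset.image cells Finset.univ)) := by
    rw [hterm j0 hj0inj, hε0, haj0, tsub_self]
    have himg : Finset.image (fun m => L (j0 m)) Finset.univ
        = Finset.image cells Finset.univ := Finset.image_congr (fun m _ => hLj0 m)
    rw [himg, MvPolynomial.monomial_zero', MvPolynomial.smul_eq_C_mul, map_mul,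
      map_intCast, zsmul_eq_mul]
    ring
  -- representation of the other terms
  have hrep : ∀ j ∈ T0.erase j0, ∃ coefP : MvPolynomial (Fin (n + k) ⊕ Fin (n + k)) ℚ,
      monDiff m0 ((∏ m : Fin k, Mm (Fin.natAdd n m) (j m)) * (basisMat Mm j).det)
        = coefP * MvPolynomial.rename (Sum.map (Fin.castAdd k) (Fin.castAdd k))
            (deltaOfFinset n (F \ Finset.image (fun m => L (j m)) Finset.univ))
      ∧ ∃ g : MvPolynomial (Fin k ⊕ Fin k) ℚ,
          coefP = MvPolynomial.rename (Sum.map (Fin.natAdd n) (Fin.natAdd n)) g ∧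
          MvPolynomial.constantCoeff g = 0 := by
    intro j hj
    have hjne := (Finset.mem_erase.1 hj).1
    have hjT0 := (Finset.mem_erase.1 hj).2
    have hjinj : Function.Injective j := (Finset.mem_filter.1 hjT0).2.1
    have hshadow := (Finset.mem_filter.1 hjT0).2.2
    obtain ⟨ε, hε⟩ := hdetN j hjinj
    set d : (Fin k ⊕ Fin k) →₀ ℕ :=
      (∑ m : Fin k, Finsupp.single (Sum.inl m) ((L (j m)).1 - (cells m).1))
        + ∑ m : Fin k, Finsupp.single (Sum.inr m) ((L (j m)).2 - (cells m).2) with hd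
    refine ⟨((ε : ℤ) : ℚ) • monomial (aOf j - m0) (cDF j), ?_, ?_⟩
    · rw [hterm j hjinj, hε]
      rw [smul_mul_assoc, mul_smul_comm]
      rw [← Int.cast_smul_eq_zsmul ℚ]
    · refine ⟨((ε : ℤ) : ℚ) • monomial d (cDF j), ?_, ?_⟩
      · rw [map_smul, MvPolynomial.rename_monomial]
        congr 1
        rw [hd, mapDomain_expPair, haOf, hm0, expPair_tsub]
      · rw [MvPolynomial.smul_eq_C_mul, map_mul, MvPolynomial.constantCoeff_C,
          MvPolynomial.constantCoeff_monomial, if_neg, mul_zero]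
        intro hc
        apply hjne
        have heq : ∀ m, L (j m) = cells m := by
          intro m
          have h1 : d (Sum.inl m) = 0 := by rw [hc]; rfl
          have h2 : d (Sum.inr m) = 0 := by rw [hc]; rfl
          rw [hd, pairSingle_apply_inl] at h1
          rw [hd, pairSingle_apply_inr] at h2
          have hs := hshadow m
          have : (L (j m)).1 = (cells m).1 := by omega
          have : (L (j m)).2 = (cells m).2 := by omega
          exact Prod.ext (by omega) (by omega)
        funext m
        apply hLinj
        rw [heq m, hLj0 m]
  set coefFn : (Fin k → Fin (n + k)) → MvPolynomial (Fin (n + k) ⊕ Fin (n + k)) ℚ :=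
    fun j => if hj : j ∈ T0.erase j0 then (hrep j hj).choose else 0 with hcoefFn
  refine ⟨(T0.erase j0).image (fun j => fun m => L (j m)),
    fun f => ∑ j ∈ (T0.erase j0).filter (fun j => (fun m => L (j m)) = f), coefFn j, ?_, ?_⟩
  · -- the main identity
    have hcf : ∀ j ∈ T0.erase j0,
        monDiff m0 ((∏ m : Fin k, Mm (Fin.natAdd n m) (j m)) * (basisMat Mm j).det)
          = coefFn j * MvPolynomial.rename (Sum.map (Fin.castAdd k) (Fin.castAdd k))
              (deltaOfFinset n (F \ Finset.image (fun m => L (j m)) Finset.univ)) := by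
      intro j hj
      have : coefFn j = (hrep j hj).choose := by
        rw [hcoefFn]
        exact dif_pos hj
      rw [this]
      exact (hrep j hj).choose_spec.1
    rw [hstart, hsum, ← Finset.add_sum_erase T0 _ hj0T0, hterm0]
    congr 1
    rw [Finset.sum_congr rfl hcf]
    refine (Finset.sum_image' (fun j' => coefFn j' *
      MvPolynomial.rename (Sum.map (Fin.castAdd k) (Fin.castAdd k))
        (deltaOfFinset n (F \ Finset.image (fun m => L (j' m)) Finset.univ))) ?_).symm
    intro j hjmem
    simp only
    rw [Finset.sum_mul]
    refine Finset.sum_congr rfl fun j' hj' => ?_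
    have hgg := (Finset.mem_filter.1 hj').2
    rw [hgg]
  · -- the properties of the coefficients
    intro f hf
    obtain ⟨j, hjmem, rfl⟩ := Finset.mem_image.1 hf
    have hjT0 := (Finset.mem_erase.1 hjmem).2
    have hjinj : Function.Injective j := (Finset.mem_filter.1 hjT0).2.1
    have hshadow := (Finset.mem_filter.1 hjT0).2.2
    refine ⟨fun a b hab => hjinj (hLinj hab), fun m => ⟨sortGet_mem F hcard L hL _, hshadow m⟩, ?_⟩
    have hfil : (T0.erase j0).filter
        (fun j' => (fun m => L (j' m)) = (fun m => L (j m))) = {j} := by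
      ext j'
      simp only [Finset.mem_filter, Finset.mem_singleton]
      constructor
      · rintro ⟨hj'mem, hEq⟩
        funext m
        exact hLinj (congrFun hEq m)
      · rintro rfl
        exact ⟨hjmem, rfl⟩
    obtain ⟨g, hg1, hg2⟩ := (hrep j hjmem).choose_spec.2
    refine ⟨g, ?_, hg2⟩
    simp only
    rw [hfil, Finset.sum_singleton]
    simp only [hcoefFn]
    rw [dif_pos hjmem]
    exact hg1
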